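/- Let 0 < p ≤ 1, let (M,d) be a metric space with base point 0, let C ≥ 0, and let φ : P(M) → ℝ be a linear functional. Then |φ(μ)| ≤ C·‖μ‖_p for all μ ∈ P(M) if and only if the function f : M → ℝ defined by f(x) = φ(δ(x)) satisfies f(0) = 0, |f(x) − f(y)| ≤ C·d(x,y) for all x, y ∈ M, and φ(μ) = Σ_{x∈M} μ(x)·f(x) for all μ ∈ P(M). (The dual of F_p(M) is canonically and isometrically identified with the space Lip_0(M) of Lipschitz functions on M vanishing at the base point; in particular F_p(M) and its Banach envelope F(M) have the same dual.) -/

import Mathlib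

open scoped BigOperators Classical

noncomputable section

/-- The point mass `δ(x)` in the free space construction: the indicator function of `{x}`
if `x ≠ base`, and `0` if `x = base`. -/
def freeDelta {M : Type*} (base x : M) : M → ℝ :=
  fun z => if x = base then 0 else if z = x then 1 else 0

/-- The set of admissible quantities `(∑ j |a_j|^p)^{1/p}` arising from expansions
`μ = ∑ j a_j (δ(x_j) - δ(y_j))/d(x_j, y_j)` with all points `x_j ≠ y_j` lying in `N`. -/
def freeNormSet {M : Type*} [MetricSpace M] (base : M) (N : Set M) (p : ℝ) (μ : M → ℝ) :
    Set ℝ :=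
  {r | ∃ (n : ℕ) (a : Fin n → ℝ) (x y : Fin n → M),
    (∀ j, x j ∈ N) ∧ (∀ j, y j ∈ N) ∧ (∀ j, x j ≠ y j) ∧
    μ = (fun z => ∑ j, a j *
      ((freeDelta base (x j) z - freeDelta base (y j) z) / dist (x j) (y j))) ∧
    r = (∑ j, |a j| ^ p) ^ (1 / p)}

/-- The Lipschitz-free `p`-norm of `μ` computed with expansions supported on `N ⊆ M`. -/
def freeNormOn {M : Type*} [MetricSpace M] (base : M) (N : Set M) (p : ℝ) (μ : M → ℝ) : ℝ :=
  sInf (freeNormSet base N p μ)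

/-- The Lipschitz-free `p`-norm of `μ ∈ P(M)`. -/
def freeNorm {M : Type*} [MetricSpace M] (base : M) (p : ℝ) (μ : M → ℝ) : ℝ :=
  freeNormOn base Set.univ p μ


/-- The space `P(M)` of finitely supported real functions on `M` vanishing at the base
point, as a submodule of `M → ℝ`. -/
def freeSpan (M : Type*) [MetricSpace M] (base : M) : Submodule ℝ (M → ℝ) where
  carrier := {μ | (Function.support μ).Finite ∧ μ base = 0}
  add_mem' := by
    rintro a b ⟨ha, ha0⟩ ⟨hb, hb0⟩
    exact ⟨(ha.union hb).subset (Function.support_add a b), by simp [ha0, hb0]⟩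
  zero_mem' := ⟨by simp, rfl⟩
  smul_mem' := by
    rintro c a ⟨ha, ha0⟩
    refine ⟨ha.subset ?_, by simp [ha0]⟩
    intro z hz
    simp only [Function.mem_support, Pi.smul_apply, smul_eq_mul] at hz
    exact Function.mem_support.mpr fun h => hz (by simp [h])

lemma freeDelta_mem_freeSpan {M : Type*} [MetricSpace M] (base x : M) :
    freeDelta base x ∈ freeSpan M base := by
  constructor
  · apply Set.Finite.subset (Set.finite_singleton x)
    intro z hz
    simp only [Function.mem_support, freeDelta] at hz
    split_ifs at hz with h1 h2
    · exact absurd rfl hz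
    · simp [h2]
    · exact absurd rfl hz
  · simp only [freeDelta]
    split_ifs with h1 h2
    · rfl
    · exact absurd h2.symm h1
    · rfl



section Aux

variable {M : Type*} [MetricSpace M] (base : M)

lemma rpow_add_le_add_rpow_real {a b p : ℝ} (ha : 0 ≤ a) (hb : 0 ≤ b) (hp : 0 ≤ p)
    (hp1 : p ≤ 1) : (a + b) ^ p ≤ a ^ p + b ^ p := by
  have h := NNReal.rpow_add_le_add_rpow a.toNNReal b.toNNReal hp hp1
  rw [← Real.coe_toNNReal a ha, ← Real.coe_toNNReal b hb, ← NNReal.coe_add,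
    ← NNReal.coe_rpow, ← NNReal.coe_rpow, ← NNReal.coe_rpow, ← NNReal.coe_add]
  exact_mod_cast h

lemma sum_rpow_ineq {ι : Type*} (s : Finset ι) (f : ι → ℝ) (hf : ∀ i, 0 ≤ f i) {p : ℝ}
    (hp0 : 0 < p) (hp1 : p ≤ 1) : (∑ i ∈ s, f i) ^ p ≤ ∑ i ∈ s, f i ^ p := by
  induction s using Finset.cons_induction with
  | empty => simp [Real.zero_rpow hp0.ne']
  | cons a s ha ih =>
    rw [Finset.sum_cons, Finset.sum_cons]
    calc (f a + ∑ i ∈ s, f i) ^ p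
        ≤ f a ^ p + (∑ i ∈ s, f i) ^ p :=
          rpow_add_le_add_rpow_real (hf a) (Finset.sum_nonneg fun i _ => hf i) hp0.le hp1
      _ ≤ f a ^ p + ∑ i ∈ s, f i ^ p := add_le_add le_rfl ih

lemma sum_abs_le_rpow {n : ℕ} (a : Fin n → ℝ) {p : ℝ} (hp0 : 0 < p) (hp1 : p ≤ 1) :
    ∑ j, |a j| ≤ (∑ j, |a j| ^ p) ^ (1 / p) := by
  have h1 : (∑ j, |a j|) ^ p ≤ ∑ j, |a j| ^ p :=
    sum_rpow_ineq _ _ (fun i => abs_nonneg _) hp0 hp1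
  have h2 : ((∑ j, |a j|) ^ p) ^ (1 / p) ≤ (∑ j, |a j| ^ p) ^ (1 / p) :=
    Real.rpow_le_rpow (Real.rpow_nonneg (Finset.sum_nonneg fun i _ => abs_nonneg _) _) h1
      (by positivity)
  rwa [← Real.rpow_mul (Finset.sum_nonneg fun i _ => abs_nonneg _),
    mul_one_div_cancel hp0.ne', Real.rpow_one] at h2

lemma freeDelta_self : freeDelta base base = 0 := by
  funext z; simp [freeDelta]

lemma freeSpan_finite (μ : freeSpan M base) : (Function.support (μ : M → ℝ)).Finite := μ.2.1

lemma freeSpan_base (μ : freeSpan M base) : (μ : M → ℝ) base = 0 := μ.2.2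

lemma sum_mul_freeDelta (S : Finset M) (μ : M → ℝ) (hsupp : Function.support μ ⊆ ↑S)
    (h0 : μ base = 0) (z : M) :
    ∑ x ∈ S, μ x * freeDelta base x z = μ z := by
  have hterm : ∀ x ∈ S, μ x * freeDelta base x z = if x = z then μ z else 0 := by
    intro x _
    by_cases hxz : x = z
    · subst hxz
      by_cases hxb : x = base
      · subst hxb; simp [freeDelta, h0]
      · simp [freeDelta, hxb]
    · simp only [hxz, if_false]
      by_cases hxb : x = base
      · subst hxb; simp [freeDelta]
      · simp [freeDelta, hxb, Ne.symm hxz]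
  rw [Finset.sum_congr rfl hterm, Finset.sum_ite_eq' S z (fun _ => μ z)]
  split_ifs with h
  · rfl
  · have : z ∉ Function.support μ := fun hz => h (hsupp hz)
    exact (Function.notMem_support.mp this).symm

lemma freeSpan_repr (μ : freeSpan M base) :
    μ = ∑ x ∈ (freeSpan_finite base μ).toFinset, (μ : M → ℝ) x •
      (⟨freeDelta base x, freeDelta_mem_freeSpan base x⟩ : freeSpan M base) := by
  apply Subtype.ext
  have hcoe : ((∑ x ∈ (freeSpan_finite base μ).toFinset, (μ : M → ℝ) x •
      (⟨freeDelta base x, freeDelta_mem_freeSpan base x⟩ : freeSpan M base) :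
      freeSpan M base) : M → ℝ)
      = ∑ x ∈ (freeSpan_finite base μ).toFinset, (μ : M → ℝ) x • freeDelta base x := by
    push_cast
    rfl
  rw [hcoe]
  funext z
  rw [Finset.sum_apply]
  simp only [Pi.smul_apply, smul_eq_mul]
  exact (sum_mul_freeDelta base _ _ (by simp) (freeSpan_base base μ) z).symm

lemma phi_repr (φ : freeSpan M base →ₗ[ℝ] ℝ) (μ : freeSpan M base) :
    φ μ = ∑ x ∈ (freeSpan_finite base μ).toFinset, (μ : M → ℝ) x *
      φ ⟨freeDelta base x, freeDelta_mem_freeSpan base x⟩ := by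
  conv_lhs => rw [freeSpan_repr base μ]
  rw [map_sum]
  exact Finset.sum_congr rfl fun x _ => by rw [map_smul, smul_eq_mul]

lemma phi_finsum (φ : freeSpan M base →ₗ[ℝ] ℝ) (μ : freeSpan M base) :
    φ μ = ∑ᶠ x, (μ : M → ℝ) x * φ ⟨freeDelta base x, freeDelta_mem_freeSpan base x⟩ := by
  rw [phi_repr base φ μ]
  refine (finsum_eq_finset_sum_of_support_subset _ ?_).symm
  intro x hx
  simp only [Function.mem_support, Set.Finite.coe_toFinset] at hx ⊢
  intro h
  exact hx (by rw [h, zero_mul])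

lemma freeNormSet_nonneg {N : Set M} {p : ℝ} {μ : M → ℝ} :
    ∀ r ∈ freeNormSet base N p μ, 0 ≤ r := by
  rintro r ⟨n, a, x, y, -, -, -, -, rfl⟩
  exact Real.rpow_nonneg (Finset.sum_nonneg fun j _ =>
    Real.rpow_nonneg (abs_nonneg _) _) _

lemma freeNormSet_bddBelow {N : Set M} {p : ℝ} {μ : M → ℝ} :
    BddBelow (freeNormSet base N p μ) :=
  ⟨0, fun r hr => freeNormSet_nonneg base r hr⟩

lemma freeNormSet_nonempty (p : ℝ) (μ : freeSpan M base) :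
    (freeNormSet base Set.univ p (μ : M → ℝ)).Nonempty := by
  classical
  set S : Finset M := (freeSpan_finite base μ).toFinset with hS
  set e : Fin S.card → M := fun j => (S.equivFin.symm j : M) with he
  have heS : ∀ j, e j ∈ S := fun j => (S.equivFin.symm j).2
  have hne : ∀ j, e j ≠ base := by
    intro j h
    have : (μ : M → ℝ) (e j) ≠ 0 := by
      have := heS j
      rw [hS, Set.Finite.mem_toFinset] at this
      exact this
    rw [h] at this
    exact this (freeSpan_base base μ)
  refine ⟨_, S.card, fun j => (μ : M → ℝ) (e j) * dist (e j) base, e, fun _ => base,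
    fun _ => Set.mem_univ _, fun _ => Set.mem_univ _, hne, ?_, rfl⟩
  funext z
  have hterm : ∀ j, (μ : M → ℝ) (e j) * dist (e j) base *
      ((freeDelta base (e j) z - freeDelta base base z) / dist (e j) base)
      = (μ : M → ℝ) (e j) * freeDelta base (e j) z := by
    intro j
    have hd : dist (e j) base ≠ 0 := dist_ne_zero.mpr (hne j)
    rw [freeDelta_self]
    field_simp
    simp
  calc (μ : M → ℝ) z = ∑ x ∈ S, (μ : M → ℝ) x * freeDelta base x z :=
        (sum_mul_freeDelta base _ _ (by simp [hS]) (freeSpan_base base μ) z).symm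
    _ = ∑ j, (μ : M → ℝ) (e j) * freeDelta base (e j) z := by
        rw [← Finset.sum_coe_sort S (fun x => (μ : M → ℝ) x * freeDelta base x z)]
        exact (Equiv.sum_comp S.equivFin.symm
          (fun x : S => (μ : M → ℝ) x * freeDelta base (x : M) z)).symm
    _ = _ := by
        refine Finset.sum_congr rfl fun j _ => (hterm j).symm

lemma freeNorm_pair_le {p : ℝ} (hp0 : 0 < p) {x y : M} (hxy : x ≠ y) :
    freeNorm base p (freeDelta base x - freeDelta base y) ≤ dist x y := by
  apply csInf_le (freeNormSet_bddBelow base)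
  refine ⟨1, fun _ => dist x y, fun _ => x, fun _ => y,
    fun _ => Set.mem_univ _, fun _ => Set.mem_univ _, fun _ => hxy, ?_, ?_⟩
  · funext z
    have hd : dist x y ≠ 0 := dist_ne_zero.mpr hxy
    simp only [Finset.sum_const, Finset.card_univ, Fintype.card_fin, one_smul,
      Fin.sum_univ_one]
    rw [← mul_div_assoc, mul_div_cancel_left₀ _ hd]
    rfl
  · rw [Fin.sum_univ_one, abs_of_nonneg dist_nonneg,
      ← Real.rpow_mul dist_nonneg, mul_one_div_cancel hp0.ne', Real.rpow_one]

end Aux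

/-- A linear functional `φ` on `P(M)` is bounded by `C·‖·‖_p` iff it is
given by pairing with a `C`-Lipschitz function vanishing at the base point; the dual of
`F_p(M)` is canonically isometric to `Lip_0(M)`. -/
theorem dual_eq_Lip0 {M : Type*} [MetricSpace M] (base : M) (p : ℝ)
    (hp0 : 0 < p) (hp1 : p ≤ 1) (C : ℝ) (hC : 0 ≤ C)
    (φ : freeSpan M base →ₗ[ℝ] ℝ) :
    (∀ μ : freeSpan M base, |φ μ| ≤ C * freeNorm base p (μ : M → ℝ)) ↔
      ((φ ⟨freeDelta base base, freeDelta_mem_freeSpan base base⟩ = 0) ∧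
       (∀ x y : M, |φ ⟨freeDelta base x, freeDelta_mem_freeSpan base x⟩ -
          φ ⟨freeDelta base y, freeDelta_mem_freeSpan base y⟩| ≤ C * dist x y) ∧
       (∀ μ : freeSpan M base,
          φ μ = ∑ᶠ x, (μ : M → ℝ) x *
            φ ⟨freeDelta base x, freeDelta_mem_freeSpan base x⟩)) := by
  classical
  constructor
  · intro h
    refine ⟨?_, ?_, phi_finsum base φ⟩
    · have h0 : (⟨freeDelta base base, freeDelta_mem_freeSpan base base⟩ :
          freeSpan M base) = 0 := Subtype.ext (freeDelta_self base)
      rw [h0, map_zero]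
    · intro x y
      by_cases hxy : x = y
      · subst hxy
        simp only [sub_self, abs_zero]
        positivity
      · have hμ := h (⟨freeDelta base x, freeDelta_mem_freeSpan base x⟩ -
          ⟨freeDelta base y, freeDelta_mem_freeSpan base y⟩)
        rw [map_sub] at hμ
        refine hμ.trans (mul_le_mul_of_nonneg_left ?_ hC)
        have : ((⟨freeDelta base x, freeDelta_mem_freeSpan base x⟩ -
            ⟨freeDelta base y, freeDelta_mem_freeSpan base y⟩ : freeSpan M base) : M → ℝ)
            = freeDelta base x - freeDelta base y := rfl
        rw [this]
        exact freeNorm_pair_le base hp0 hxy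
  · rintro ⟨h0, hL, -⟩
    intro μ
    have key : ∀ r ∈ freeNormSet base Set.univ p (μ : M → ℝ), |φ μ| ≤ C * r := by
      rintro r ⟨n, a, x, y, -, -, hxy, hfun, rfl⟩
      have hdpos : ∀ j, 0 < dist (x j) (y j) := fun j => dist_pos.mpr (hxy j)
      have hrepr : μ = ∑ j, (a j / dist (x j) (y j)) •
          ((⟨freeDelta base (x j), freeDelta_mem_freeSpan base (x j)⟩ : freeSpan M base) -
           ⟨freeDelta base (y j), freeDelta_mem_freeSpan base (y j)⟩) := by
        apply Subtype.ext
        have hcoe : ((∑ j, (a j / dist (x j) (y j)) •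
            ((⟨freeDelta base (x j), freeDelta_mem_freeSpan base (x j)⟩ : freeSpan M base) -
             ⟨freeDelta base (y j), freeDelta_mem_freeSpan base (y j)⟩) :
            freeSpan M base) : M → ℝ)
            = ∑ j, (a j / dist (x j) (y j)) •
              (freeDelta base (x j) - freeDelta base (y j)) := by
          push_cast
          rfl
        rw [hcoe, hfun]
        funext z
        rw [Finset.sum_apply]
        refine Finset.sum_congr rfl fun j _ => ?_
        simp only [Pi.smul_apply, Pi.sub_apply, smul_eq_mul]
        rw [div_mul_eq_mul_div, mul_div_assoc]
      have hphi : φ μ = ∑ j, (a j / dist (x j) (y j)) *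
          (φ ⟨freeDelta base (x j), freeDelta_mem_freeSpan base (x j)⟩ -
           φ ⟨freeDelta base (y j), freeDelta_mem_freeSpan base (y j)⟩) := by
        conv_lhs => rw [hrepr]
        rw [map_sum]
        simp [map_smul, map_sub]
      rw [hphi]
      calc |∑ j, (a j / dist (x j) (y j)) *
            (φ ⟨freeDelta base (x j), freeDelta_mem_freeSpan base (x j)⟩ -
             φ ⟨freeDelta base (y j), freeDelta_mem_freeSpan base (y j)⟩)|
          ≤ ∑ j, |(a j / dist (x j) (y j)) *
            (φ ⟨freeDelta base (x j), freeDelta_mem_freeSpan base (x j)⟩ -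
             φ ⟨freeDelta base (y j), freeDelta_mem_freeSpan base (y j)⟩)| :=
            Finset.abs_sum_le_sum_abs _ _
        _ ≤ ∑ j, C * |a j| := by
            refine Finset.sum_le_sum fun j _ => ?_
            rw [abs_mul, abs_div, abs_of_pos (hdpos j)]
            have hb := hL (x j) (y j)
            calc |a j| / dist (x j) (y j) *
                |φ ⟨freeDelta base (x j), freeDelta_mem_freeSpan base (x j)⟩ -
                 φ ⟨freeDelta base (y j), freeDelta_mem_freeSpan base (y j)⟩|
                ≤ |a j| / dist (x j) (y j) * (C * dist (x j) (y j)) := by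
                  exact mul_le_mul_of_nonneg_left hb (by positivity)
              _ = C * |a j| := by
                  field_simp
                  rw [mul_assoc, mul_div_assoc, mul_div_cancel_left₀ _ (hdpos j).ne']
        _ = C * ∑ j, |a j| := by rw [Finset.mul_sum]
        _ ≤ C * (∑ j, |a j| ^ p) ^ (1 / p) :=
            mul_le_mul_of_nonneg_left (sum_abs_le_rpow a hp0 hp1) hC
    have hne := freeNormSet_nonempty base p μ
    rcases hC.eq_or_lt with hC0 | hCpos
    · obtain ⟨r₀, hr₀⟩ := hne
      have h1 := key r₀ hr₀
      rw [← hC0] at h1 ⊢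
      simpa using h1
    · have hdiv : |φ μ| / C ≤ sInf (freeNormSet base Set.univ p (μ : M → ℝ)) := by
        refine le_csInf hne fun r hr => ?_
        rw [div_le_iff₀' hCpos]
        exact key r hr
      exact (div_le_iff₀' hCpos).mp hdiv
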